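/- arXiv:0902.2673 — 3 statements merged into one kernel-verified Lean document; each statement's English description precedes it below -/
import Mathlib

section
/- Policy improvement decreases the average cost: let u and û be policies with associated invariant probability measures ν_u, ν_û for the kernels G(·, u), G(·, û), let ℒ, L f, H r denote the associated positive functionals with 0 < ℒ(x, Γ) for all x, Γ, and let (ρ_u, h_u) solve h_u(x) = −ρ_u ℒ(x, u(x)) + Lf(x, u(x)) + Hr(x, u(x)) + G h_u(x, u(x)). If û achieves the pointwise minimum, i.e. for all x, −ρ_u ℒ(x, û(x)) + Lf(x, û(x)) + Hr(x, û(x)) + G h_u(x, û(x)) ≤ −ρ_u ℒ(x, u(x)) + Lf(x, u(x)) + Hr(x, u(x)) + G h_u(x, u(x)) = h_u(x), and ρ_û is defined by ρ_û = ∫ [Lf(y,û(y)) + Hr(y,û(y))] dν_û(y) / ∫ ℒ(y,û(y)) dν_û(y) with the pseudo-Poisson equation for û holding analogously, then ρ_û ≤ ρ_u. -/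
open Filter MeasureTheory

/-- policy improvement decreases the average cost: if `hat` achieves
the pointwise minimum in the one-stage optimization associated to the solution
`(ρ_u, h_u)` of the pseudo-Poisson equation for `u`, then `ρ_hat ≤ ρ_u`. -/
theorem policy_improvement
    {E : Type*} [MeasurableSpace E]
    (νu νhat : Measure E) [IsProbabilityMeasure νu] [IsProbabilityMeasure νhat]
    -- the functionals associated to the policies u and hat
    (Lcu Lfu Hru Lchat Lfhat Hrhat : E → ℝ)
    (Gu Ghat : (E → ℝ) → E → ℝ)
    (hLcupos : ∀ x, 0 < Lcu x) (hLchatpos : ∀ x, 0 < Lchat x)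
    (hLfu : ∀ x, 0 ≤ Lfu x) (hHru : ∀ x, 0 ≤ Hru x)
    (hLfhat : ∀ x, 0 ≤ Lfhat x) (hHrhat : ∀ x, 0 ≤ Hrhat x)
    (hu : E → ℝ) (ρu ρhat : ℝ)
    -- integrability with respect to ν_hat
    (hint₁ : Integrable hu νhat) (hint₂ : Integrable (fun x => Ghat hu x) νhat)
    (hint₃ : Integrable Lchat νhat) (hint₄ : Integrable (fun x => Lfhat x + Hrhat x) νhat)
    -- ν_hat is invariant for the kernel of hat
    (hinv : ∫ x, Ghat hu x ∂νhat = ∫ x, hu x ∂νhat)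
    (hDpos : 0 < ∫ x, Lchat x ∂νhat)
    -- the pseudo-Poisson equation for u
    (hpoisson : ∀ x, hu x = -ρu * Lcu x + Lfu x + Hru x + Gu hu x)
    -- hat achieves the pointwise minimum
    (himp : ∀ x, -ρu * Lchat x + Lfhat x + Hrhat x + Ghat hu x ≤
      -ρu * Lcu x + Lfu x + Hru x + Gu hu x)
    -- definition of ρ_hat as the ratio of averaged costs
    (hρhat : ρhat = (∫ x, (Lfhat x + Hrhat x) ∂νhat) / ∫ x, Lchat x ∂νhat)
    -- the pseudo-Poisson equation for hat holds analogously
    (hpoissonhat : ∃ hhat : E → ℝ, ∀ x, hhat x = -ρhat * Lchat x + Lfhat x + Hrhat x + Ghat hhat x) :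
    ρhat ≤ ρu := by
  have key : ∀ x, -ρu * Lchat x + (Lfhat x + Hrhat x) + Ghat hu x ≤ hu x := by
    intro x
    have := himp x
    rw [← hpoisson x] at this
    linarith
  have hintL : Integrable (fun x => -ρu * Lchat x + (Lfhat x + Hrhat x) + Ghat hu x) νhat :=
    ((hint₃.const_mul (-ρu)).add hint₄).add hint₂
  have hmono : ∫ x, (-ρu * Lchat x + (Lfhat x + Hrhat x) + Ghat hu x) ∂νhat ≤ ∫ x, hu x ∂νhat :=
    integral_mono hintL hint₁ key
  have e1 : ∫ x, (-ρu * Lchat x + (Lfhat x + Hrhat x) + Ghat hu x) ∂νhat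
      = (∫ x, (-ρu * Lchat x + (Lfhat x + Hrhat x)) ∂νhat) + ∫ x, Ghat hu x ∂νhat :=
    integral_add (f := fun x => -ρu * Lchat x + (Lfhat x + Hrhat x))
      (g := fun x => Ghat hu x) ((hint₃.const_mul (-ρu)).add hint₄) hint₂
  have e2 : ∫ x, (-ρu * Lchat x + (Lfhat x + Hrhat x)) ∂νhat
      = (∫ x, -ρu * Lchat x ∂νhat) + ∫ x, (Lfhat x + Hrhat x) ∂νhat :=
    integral_add (f := fun x => -ρu * Lchat x)
      (g := fun x => Lfhat x + Hrhat x) (hint₃.const_mul (-ρu)) hint₄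
  have e3 : ∫ x, -ρu * Lchat x ∂νhat = -ρu * ∫ x, Lchat x ∂νhat := integral_const_mul _ _
  rw [e1, e2, e3, hinv] at hmono
  have hkey : ∫ x, (Lfhat x + Hrhat x) ∂νhat ≤ ρu * ∫ x, Lchat x ∂νhat := by linarith
  rw [hρhat, div_le_iff₀ hDpos]
  linarith
end

section
/- Uniform bound on the PIA value functions: if (ρ_n, h_n) is the sequence generated by the policy iteration algorithm, then ‖h_n‖_g ≤ a·max{ρ_0 K_λ, M(1+bK_λ)/c}/(1−κ) for all n, where the constants come from the expected-growth and geometric-ergodicity assumptions. -/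
open Filter MeasureTheory

/-- uniform bound on the PIA value functions:
`‖h_n‖_g ≤ a·max{ρ₀K_λ, M(1+bK_λ)/c}/(1-κ)` for all `n`. -/
theorem pia_value_functions_uniform_bound
    {E : Type*}
    (g : E → ℝ) (hg : ∀ x, 1 ≤ g x)
    (a κ Klam M b c : ℝ)
    (ha : 0 < a) (hκ0 : 0 < κ) (hκ1 : κ < 1)
    (hKlam : 0 < Klam) (hM : 0 ≤ M) (hb : 0 ≤ b) (hc : 0 < c)
    -- the kernel operator and the "integral against ν_{u_n}" functional
    (Gop : ℕ → (E → ℝ) → E → ℝ) (intν : ℕ → (E → ℝ) → ℝ)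
    (ρ : ℕ → ℝ) (w : ℕ → E → ℝ) (h : ℕ → E → ℝ)
    -- h_n is the series of iterates of the one-step cost w_n
    (hrep : ∀ n x, h n x = ∑' k : ℕ, (Gop n)^[k] (w n) x)
    -- the bound on w_n coming from 0 ≤ Lf+Hr ≤ (M(1+bK_λ)/c)·g and 0 < ℒ ≤ K_λ
    (hwbd : ∀ n x, |w n x| ≤ max (ρ n * Klam) (M * (1 + b * Klam) / c) * g x)
    -- geometric ergodicity for each policy u_n
    (herg : ∀ n (v : E → ℝ) (C : ℝ), (∀ x, |v x| ≤ C * g x) →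
      ∀ (k : ℕ) (x : E), |(Gop n)^[k] v x - intν n v| ≤ a * C * κ ^ k * g x)
    (hzero : ∀ n, intν n (w n) = 0)
    -- monotonicity of the average costs
    (hρpos : ∀ n, 0 ≤ ρ n) (hρmono : ∀ n, ρ n ≤ ρ 0) :
    ∀ n x, |h n x| ≤ a * max (ρ 0 * Klam) (M * (1 + b * Klam) / c) / (1 - κ) * g x := by
  intro n x
  have h1κ : (0:ℝ) < 1 - κ := by linarith
  set Cn := max (ρ n * Klam) (M * (1 + b * Klam) / c) with hCn
  set C0 := max (ρ 0 * Klam) (M * (1 + b * Klam) / c) with hC0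
  have hCn0 : 0 ≤ Cn := le_trans (mul_nonneg (hρpos n) hKlam.le) (le_max_left _ _)
  have hCnC0 : Cn ≤ C0 :=
    max_le_max (mul_le_mul_of_nonneg_right (hρmono n) hKlam.le) le_rfl
  have hbd : ∀ k, |(Gop n)^[k] (w n) x| ≤ a * Cn * κ ^ k * g x := by
    intro k
    have := herg n (w n) Cn (hwbd n) k x
    rwa [hzero n, sub_zero] at this
  have hgeo : Summable (fun k : ℕ => a * Cn * g x * κ ^ k) :=
    (summable_geometric_of_lt_one hκ0.le hκ1).mul_left _
  have hfs : Summable (fun k : ℕ => (Gop n)^[k] (w n) x) := by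
    refine Summable.of_norm_bounded hgeo ?_
    intro k
    calc ‖(Gop n)^[k] (w n) x‖ = |(Gop n)^[k] (w n) x| := rfl
    _ ≤ a * Cn * κ ^ k * g x := hbd k
    _ = a * Cn * g x * κ ^ k := by ring
  rw [hrep n x]
  calc |∑' k : ℕ, (Gop n)^[k] (w n) x| ≤ ∑' k : ℕ, ‖(Gop n)^[k] (w n) x‖ :=
        norm_tsum_le_tsum_norm hfs.norm
    _ ≤ ∑' k : ℕ, a * Cn * g x * κ ^ k := by
        refine Summable.tsum_le_tsum (fun k => ?_) hfs.norm hgeo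
        calc ‖(Gop n)^[k] (w n) x‖ ≤ a * Cn * κ ^ k * g x := hbd k
          _ = a * Cn * g x * κ ^ k := by ring
    _ = a * Cn * g x * (1 - κ)⁻¹ := by
        rw [tsum_mul_left, tsum_geometric_of_lt_one hκ0.le hκ1]
    _ ≤ a * C0 / (1 - κ) * g x := by
        rw [div_eq_mul_inv]
        have hgx : 0 ≤ g x := le_trans zero_le_one (hg x)
        have : a * Cn * g x ≤ a * C0 * g x :=
          mul_le_mul_of_nonneg_right (mul_le_mul_of_nonneg_left hCnC0 ha.le) hgx
        calc a * Cn * g x * (1 - κ)⁻¹ ≤ a * C0 * g x * (1 - κ)⁻¹ :=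
              mul_le_mul_of_nonneg_right this (inv_nonneg.mpr h1κ.le)
          _ = a * C0 * (1 - κ)⁻¹ * g x := by ring
end

section
/- Existence of a pointwise accumulation selector: let (V(x))_{x∈E} be a measurable family of nonempty compact subsets of a compact metrizable space V, and let (θ_k)_{k∈ℕ} be a sequence of measurable selectors θ_k : E → V with θ_k(x) ∈ V(x) for all x. Then there exists a measurable selector θ : E → V with θ(x) ∈ V(x) such that for every x ∈ E, θ(x) is an accumulation point of the sequence (θ_k(x))_k, i.e. there is a subsequence k_i = k_i(x) (depending on x) with θ_{k_i}(x) → θ(x). -/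
open Filter

open TopologicalSpace Metric in
/-- Metric-space version of the accumulation selector theorem. -/
theorem accumulation_selector_metric
    {E V : Type*} [MeasurableSpace E]
    [MetricSpace V] [CompactSpace V]
    [MeasurableSpace V] [BorelSpace V]
    (Vset : E → Set V)
    (hVne : ∀ x, (Vset x).Nonempty)
    (hVcompact : ∀ x, IsCompact (Vset x))
    (θk : ℕ → E → V)
    (hθk_meas : ∀ k, Measurable (θk k))
    (hθk_mem : ∀ k x, θk k x ∈ Vset x) :
    ∃ θ : E → V, Measurable θ ∧ (∀ x, θ x ∈ Vset x) ∧
      ∀ x, ∃ φ : ℕ → ℕ, StrictMono φ ∧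
        Tendsto (fun i => θk (φ i) x) atTop (nhds (θ x)) := by
  classical
  rcases isEmpty_or_nonempty V with hV | hV
  · haveI : IsEmpty E := ⟨fun x => hV.elim (hVne x).choose⟩
    exact ⟨fun x => isEmptyElim x, measurable_of_empty _, fun x => isEmptyElim x,
      fun x => isEmptyElim x⟩
  -- the set of cluster points of the sequence `k ↦ θk k x`
  set L : E → Set V := fun x => {v | MapClusterPt v atTop fun k => θk k x} with hL
  have hLne : ∀ x, (L x).Nonempty := fun x =>
    exists_clusterPt_of_compactSpace (map (fun k => θk k x) atTop)
  have hLclosed : ∀ x, IsClosed (L x) := fun x => isClosed_setOf_clusterPt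
  have hLsub : ∀ x, L x ⊆ Vset x := by
    intro x v hv
    have hle : map (fun k => θk k x) atTop ≤ 𝓟 (Vset x) := by
      rw [le_principal_iff]
      exact mem_map.2 (Eventually.of_forall fun k => hθk_mem k x)
    have : ClusterPt v (𝓟 (Vset x)) := ClusterPt.mono (mapClusterPt_def.mp hv) hle
    rw [← (hVcompact x).isClosed.closure_eq]
    exact mem_closure_iff_clusterPt.2 this
  -- a dense sequence
  obtain ⟨u, hu⟩ := TopologicalSpace.exists_dense_seq V
  -- key measurability fact
  have key : ∀ U : Set V, IsOpen U → MeasurableSet {x | (L x ∩ U).Nonempty} := by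
    intro U hU
    have : {x | (L x ∩ U).Nonempty} =
        ⋃ i, ⋃ m : ℕ, {x | closedBall (u i) (1 / (m + 1)) ⊆ U ∧
          ∀ n : ℕ, ∃ k, n ≤ k ∧ θk k x ∈ ball (u i) (1 / (m + 1))} := by
      ext x
      simp only [Set.mem_setOf_eq, Set.mem_iUnion]
      constructor
      · rintro ⟨v, hvL, hvU⟩
        obtain ⟨ε, hε, hball⟩ := Metric.isOpen_iff.1 hU v hvU
        obtain ⟨m, hm⟩ := exists_nat_one_div_lt (half_pos hε)
        have hmpos : (0:ℝ) < 1 / (m + 1) := by positivity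
        obtain ⟨i, hi⟩ := hu.exists_dist_lt v hmpos
        refine ⟨i, m, ?_, ?_⟩
        · intro w hw
          apply hball
          have : dist w v ≤ dist w (u i) + dist (u i) v := dist_triangle _ _ _
          have h1 : dist w (u i) ≤ 1 / (m + 1) := hw
          have h2 : dist (u i) v < 1 / (m + 1) := by rwa [dist_comm] at hi
          have : dist w v < ε := by
            calc dist w v ≤ dist w (u i) + dist (u i) v := this
              _ < 1 / (m + 1) + 1 / (m + 1) := by linarith
              _ < ε / 2 + ε / 2 := by push_cast at hm ⊢; linarith
              _ = ε := by ring
          exact this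
        · have hnb : ball (u i) (1 / (m + 1)) ∈ nhds v :=
            (Metric.isOpen_ball).mem_nhds (by simpa [Metric.mem_ball] using hi)
          have := (mapClusterPt_iff_frequently.1 hvL) _ hnb
          intro n
          rcases (frequently_atTop.1 this) n with ⟨k, hk1, hk2⟩
          exact ⟨k, hk1, hk2⟩
      · rintro ⟨i, m, hsub, hfreq⟩
        have hfr : ∃ᶠ k in atTop, θk k x ∈ closedBall (u i) (1 / (m + 1)) := by
          rw [frequently_atTop]
          intro n
          rcases hfreq n with ⟨k, hk1, hk2⟩
          exact ⟨k, hk1, ball_subset_closedBall hk2⟩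
        obtain ⟨a, haB, φ, hφ, hφt⟩ :=
          (Metric.isClosed_closedBall.isCompact).tendsto_subseq' hfr
        refine ⟨a, ?_, hsub haB⟩
        have h1 : map ((fun k => θk k x) ∘ φ) atTop ≤ nhds a := hφt
        have h2 : map ((fun k => θk k x) ∘ φ) atTop ≤ map (fun k => θk k x) atTop := by
          rw [← map_map]
          exact map_mono hφ.tendsto_atTop
        exact (neBot_of_le (le_inf h1 h2) : NeBot _)
    rw [this]
    refine MeasurableSet.iUnion fun i => MeasurableSet.iUnion fun m => ?_
    by_cases h : closedBall (u i) (1 / (m + 1)) ⊆ U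
    · have : {x | closedBall (u i) (1 / (m + 1)) ⊆ U ∧
          ∀ n : ℕ, ∃ k, n ≤ k ∧ θk k x ∈ ball (u i) (1 / (m + 1))} =
          ⋂ n : ℕ, ⋃ k : ℕ, ⋃ _ : n ≤ k, (θk k) ⁻¹' ball (u i) (1 / (m + 1)) := by
        ext x
        simp only [Set.mem_setOf_eq, Set.mem_iInter, Set.mem_iUnion, Set.mem_preimage,
          exists_prop]
        exact ⟨fun hx => hx.2, fun hx => ⟨h, hx⟩⟩
      rw [this]
      exact MeasurableSet.iInter fun n => MeasurableSet.iUnion fun k =>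
        MeasurableSet.iUnion fun _ => (hθk_meas k) measurableSet_ball
    · have : {x | closedBall (u i) (1 / (m + 1)) ⊆ U ∧
          ∀ n : ℕ, ∃ k, n ≤ k ∧ θk k x ∈ ball (u i) (1 / (m + 1))} = ∅ := by
        ext x
        simp only [Set.mem_setOf_eq, Set.mem_empty_iff_false, iff_false, not_and]
        exact fun hx => absurd hx h
      rw [this]; exact MeasurableSet.empty
  -- recursive construction of approximate selectors
  set g : ℕ → E → V := fun n => Nat.rec
    (fun x => if h : ∃ i, (L x ∩ ball (u i) 1).Nonempty then u (Nat.find h) else u 0)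
    (fun n gn x => if h : ∃ i, (L x ∩ ball (u i) ((1/2 : ℝ)^(n+1))).Nonempty ∧
        dist (u i) (gn x) < (1/2 : ℝ)^(n+1) + (1/2 : ℝ)^n
      then u (Nat.find h) else u 0) n with hg
  -- existence of the index at level 0
  have hex0 : ∀ x, ∃ i, (L x ∩ ball (u i) 1).Nonempty := by
    intro x
    obtain ⟨v, hv⟩ := hLne x
    obtain ⟨i, hi⟩ := hu.exists_dist_lt v one_pos
    exact ⟨i, v, hv, by simpa [Metric.mem_ball] using hi⟩
  have hg0 : ∀ x, g 0 x = u (Nat.find (hex0 x)) := fun x => dif_pos (hex0 x)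
  -- invariant and measurability by induction
  have H : ∀ n, Measurable (g n) ∧ ∀ x, (L x ∩ ball (g n x) ((1/2 : ℝ)^n)).Nonempty := by
    intro n
    induction n with
    | zero =>
      constructor
      · have : g 0 = fun x => u (Nat.find (hex0 x)) := funext hg0
        rw [this]
        exact Measurable.find (fun i => measurable_const)
          (fun i => key _ Metric.isOpen_ball) hex0
      · intro x
        rw [hg0 x, pow_zero]
        exact Nat.find_spec (hex0 x)
    | succ n ih =>
      obtain ⟨ihm, ihinv⟩ := ih
      have hex : ∀ x, ∃ i, (L x ∩ ball (u i) ((1/2 : ℝ)^(n+1))).Nonempty ∧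
          dist (u i) (g n x) < (1/2 : ℝ)^(n+1) + (1/2 : ℝ)^n := by
        intro x
        obtain ⟨v, hvL, hvb⟩ := ihinv x
        have hpos : (0:ℝ) < (1/2 : ℝ)^(n+1) := by positivity
        obtain ⟨i, hi⟩ := hu.exists_dist_lt v hpos
        refine ⟨i, ⟨v, hvL, by simpa [Metric.mem_ball] using hi⟩, ?_⟩
        have h1 : dist (u i) v < (1/2 : ℝ)^(n+1) := by rwa [dist_comm] at hi
        have h2 : dist v (g n x) < (1/2 : ℝ)^n := hvb
        calc dist (u i) (g n x) ≤ dist (u i) v + dist v (g n x) := dist_triangle _ _ _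
          _ < (1/2 : ℝ)^(n+1) + (1/2 : ℝ)^n := by linarith
      have hgs : ∀ x, g (n+1) x = u (Nat.find (hex x)) := fun x => dif_pos (hex x)
      constructor
      · have : g (n+1) = fun x => u (Nat.find (hex x)) := funext hgs
        rw [this]
        refine Measurable.find (fun i => measurable_const) (fun i => ?_) hex
        have : {x | (L x ∩ ball (u i) ((1/2 : ℝ)^(n+1))).Nonempty ∧
            dist (u i) (g n x) < (1/2 : ℝ)^(n+1) + (1/2 : ℝ)^n} =
            {x | (L x ∩ ball (u i) ((1/2 : ℝ)^(n+1))).Nonempty} ∩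
            (g n) ⁻¹' ball (u i) ((1/2 : ℝ)^(n+1) + (1/2 : ℝ)^n) := by
          ext x
          simp [Set.mem_setOf_eq, Metric.mem_ball, dist_comm]
        rw [this]
        exact (key _ Metric.isOpen_ball).inter (ihm measurableSet_ball)
      · intro x
        rw [hgs x]
        exact (Nat.find_spec (hex x)).1
  -- the distance bound between consecutive approximations
  have hdist : ∀ n x, dist (g n x) (g (n+1) x) ≤ 2 * (1/2 : ℝ)^n := by
    intro n x
    have hex : ∃ i, (L x ∩ ball (u i) ((1/2 : ℝ)^(n+1))).Nonempty ∧
        dist (u i) (g n x) < (1/2 : ℝ)^(n+1) + (1/2 : ℝ)^n := by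
      obtain ⟨v, hvL, hvb⟩ := (H n).2 x
      have hpos : (0:ℝ) < (1/2 : ℝ)^(n+1) := by positivity
      obtain ⟨i, hi⟩ := hu.exists_dist_lt v hpos
      refine ⟨i, ⟨v, hvL, by simpa [Metric.mem_ball] using hi⟩, ?_⟩
      have h1 : dist (u i) v < (1/2 : ℝ)^(n+1) := by rwa [dist_comm] at hi
      calc dist (u i) (g n x) ≤ dist (u i) v + dist v (g n x) := dist_triangle _ _ _
        _ < (1/2 : ℝ)^(n+1) + (1/2 : ℝ)^n := by linarith [show dist v (g n x) < (1/2:ℝ)^n from hvb]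
    have hgs : g (n+1) x = u (Nat.find hex) := dif_pos hex
    have hb := (Nat.find_spec hex).2
    rw [hgs, dist_comm]
    have hpow : (1/2 : ℝ)^(n+1) ≤ (1/2 : ℝ)^n := by
      apply pow_le_pow_of_le_one <;> norm_num
    linarith
  -- Cauchy, hence convergent
  have hcauchy : ∀ x, CauchySeq (fun n => g n x) := by
    intro x
    exact cauchySeq_of_le_geometric (1/2) 2 (by norm_num) (fun n => hdist n x)
  have hconv : ∀ x, ∃ v, Tendsto (fun n => g n x) atTop (nhds v) := fun x =>
    cauchySeq_tendsto_of_complete (hcauchy x)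
  choose θ hθ using hconv
  have hθmeas : Measurable θ :=
    measurable_of_tendsto_metrizable (fun n => (H n).1) (tendsto_pi_nhds.2 hθ)
  -- the limit lies in L x
  have hθL : ∀ x, θ x ∈ L x := by
    intro x
    have hv : ∀ n : ℕ, ∃ v ∈ L x, dist v (g n x) < (1/2 : ℝ)^n := by
      intro n; obtain ⟨v, hvL, hvb⟩ := (H n).2 x; exact ⟨v, hvL, hvb⟩
    choose v hvL hvb using hv
    have hvt : Tendsto v atTop (nhds (θ x)) := by
      rw [tendsto_iff_dist_tendsto_zero]
      apply squeeze_zero (fun n => dist_nonneg)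
        (g := fun n => (1/2 : ℝ)^n + dist (g n x) (θ x))
      · intro n
        calc dist (v n) (θ x) ≤ dist (v n) (g n x) + dist (g n x) (θ x) := dist_triangle _ _ _
          _ ≤ (1/2 : ℝ)^n + dist (g n x) (θ x) := by linarith [hvb n]
      · have h1 : Tendsto (fun n : ℕ => (1/2 : ℝ)^n) atTop (nhds 0) :=
          tendsto_pow_atTop_nhds_zero_of_lt_one (by norm_num) (by norm_num)
        have h2 : Tendsto (fun n => dist (g n x) (θ x)) atTop (nhds 0) :=
          tendsto_iff_dist_tendsto_zero.1 (hθ x)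
        simpa using h1.add h2
    exact (hLclosed x).mem_of_tendsto hvt (Eventually.of_forall hvL)
  refine ⟨θ, hθmeas, fun x => hLsub x (hθL x), fun x => ?_⟩
  obtain ⟨ψ, hψ, hψt⟩ := TopologicalSpace.FirstCountableTopology.tendsto_subseq (hθL x)
  exact ⟨ψ, hψ, hψt⟩

/-- existence of a pointwise accumulation selector (Schäl):
given a measurable compact-valued multifunction `x ↦ V(x)` in a compact
metrizable space and measurable selectors `θ_k`, there is a measurable selector
`θ` such that `θ(x)` is an accumulation point of `(θ_k(x))_k` for every `x`. -/
theorem accumulation_selector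
    {E V : Type*} [MeasurableSpace E]
    [TopologicalSpace V] [CompactSpace V] [TopologicalSpace.MetrizableSpace V]
    [MeasurableSpace V] [BorelSpace V]
    (Vset : E → Set V)
    (hVne : ∀ x, (Vset x).Nonempty)
    (hVcompact : ∀ x, IsCompact (Vset x))
    -- measurability of the multifunction
    (hVmeas : ∀ s : Set V, IsOpen s → MeasurableSet {x | (Vset x ∩ s).Nonempty})
    (θk : ℕ → E → V)
    (hθk_meas : ∀ k, Measurable (θk k))
    (hθk_mem : ∀ k x, θk k x ∈ Vset x) :
    ∃ θ : E → V, Measurable θ ∧ (∀ x, θ x ∈ Vset x) ∧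
      ∀ x, ∃ φ : ℕ → ℕ, StrictMono φ ∧
        Tendsto (fun i => θk (φ i) x) atTop (nhds (θ x)) := by
  letI : MetricSpace V := TopologicalSpace.metrizableSpaceMetric V
  exact accumulation_selector_metric Vset hVne hVcompact θk hθk_meas hθk_mem
end
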